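/- Let 𝔰 be an N-dimensional complex solvable Lie algebra with ordered basis (x₁, …, x_N), and let 𝔫 ⊆ 𝔰 be a nilpotent Lie ideal with [𝔰,𝔰] ⊆ 𝔫. Then k(𝔰) ≥ |Δ|, i.e., the number of distinct irreducible factors (up to scalar multiples) of the characteristic polynomial Q_𝔰 is at least the number of distinct weights of the action of 𝔰 on 𝔫. -/

import Mathlib

/-- The characteristic polynomial `Q_L(z₀, …, z_N) = det (z₀ I + z₁ ad x₁ + ⋯ + z_N ad x_N)`
of an `N`-dimensional complex Lie algebra with ordered basis `(x₁, …, x_N)`; the variable of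
index `0` is `z₀` and the variable of index `k.succ` is attached to the basis vector `x_k`. -/
noncomputable def lieCharPoly (N : ℕ) (L : Type) [LieRing L] [LieAlgebra ℂ L]
    (b : Module.Basis (Fin N) ℂ L) : MvPolynomial (Fin (N + 1)) ℂ :=
  Matrix.det
    ((MvPolynomial.X 0 : MvPolynomial (Fin (N + 1)) ℂ) •
        (1 : Matrix (Fin N) (Fin N) (MvPolynomial (Fin (N + 1)) ℂ)) +
      ∑ k : Fin N,
        (MvPolynomial.X k.succ : MvPolynomial (Fin (N + 1)) ℂ) •
          ((LinearMap.toMatrix b b (LieAlgebra.ad ℂ L (b k))).map (MvPolynomial.C)))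

/-- `k(Q)`: the number of distinct irreducible factors of `Q` up to scalar multiples, i.e. the
cardinality of the set of associate classes of irreducible polynomials dividing `Q`. -/
noncomputable def numIrreducibleFactors {σ : Type} (Q : MvPolynomial σ ℂ) : ℕ :=
  {a : Associates (MvPolynomial σ ℂ) | Irreducible a ∧ a ∣ Associates.mk Q}.ncard

/-- The weight space `V_α ⊆ 𝔫` of a linear functional `α : 𝔰 → ℂ`: the set of `v ∈ 𝔫` lying,
for every `x ∈ 𝔰`, in the generalized eigenspace of `(ad x)|_𝔫` for the eigenvalue `α x`. -/
noncomputable def lieWeightSpace (𝔰 : Type) [LieRing 𝔰] [LieAlgebra ℂ 𝔰]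
    (𝔫 : LieIdeal ℂ 𝔰) (α : Module.Dual ℂ 𝔰) : Submodule ℂ ↥𝔫 :=
  ⨅ x : 𝔰, Module.End.maxGenEigenspace (LieModule.toEnd ℂ 𝔰 ↥𝔫 x) (α x)

/-- The set of weights `Δ`: linear functionals with nonzero weight space. -/
noncomputable def lieWeightSet (𝔰 : Type) [LieRing 𝔰] [LieAlgebra ℂ 𝔰]
    (𝔫 : LieIdeal ℂ 𝔰) : Set (Module.Dual ℂ 𝔰) :=
  {α | lieWeightSpace 𝔰 𝔫 α ≠ ⊥}

section Aux

open MvPolynomial Polynomial Matrix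

variable {N : ℕ} {𝔰 : Type} [LieRing 𝔰] [LieAlgebra ℂ 𝔰]

attribute [local instance 100] LieRing.ofAssociativeRing

/-- The matrix `∑ k, X k • M_k` over `MvPolynomial (Fin N) ℂ`. -/
noncomputable def auxMat (b : Module.Basis (Fin N) ℂ 𝔰) :
    Matrix (Fin N) (Fin N) (MvPolynomial (Fin N) ℂ) :=
  ∑ k : Fin N, (MvPolynomial.X k : MvPolynomial (Fin N) ℂ) •
    ((LinearMap.toMatrix b b (LieAlgebra.ad ℂ 𝔰 (b k))).map MvPolynomial.C)

lemma finSuccEquiv_C' (a : ℂ) :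
    MvPolynomial.finSuccEquiv ℂ N (MvPolynomial.C a) = Polynomial.C (MvPolynomial.C a) := by
  simp [MvPolynomial.finSuccEquiv_apply]

lemma finSuccEquiv_lieCharPoly (b : Module.Basis (Fin N) ℂ 𝔰) :
    MvPolynomial.finSuccEquiv ℂ N (lieCharPoly N 𝔰 b) = Matrix.charpoly (-(auxMat b)) := by
  rw [lieCharPoly, Matrix.charpoly, show ((MvPolynomial.finSuccEquiv ℂ N) : MvPolynomial (Fin (N+1)) ℂ → Polynomial (MvPolynomial (Fin N) ℂ)) = ((MvPolynomial.finSuccEquiv ℂ N : MvPolynomial (Fin (N+1)) ℂ →+* Polynomial (MvPolynomial (Fin N) ℂ))) from rfl, RingHom.map_det]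
  congr 1
  ext i j
  simp [auxMat, charmatrix, Matrix.one_apply, Matrix.map_apply, Finset.sum_apply,
    Matrix.sum_apply, MvPolynomial.finSuccEquiv_X_zero, MvPolynomial.finSuccEquiv_X_succ, finSuccEquiv_C',
    Matrix.diagonal, apply_ite, mul_comm, Finset.mul_sum]

lemma map_eval_charpoly (b : Module.Basis (Fin N) ℂ 𝔰) (c : Fin N → ℂ) :
    (Matrix.charpoly (-(auxMat b))).map (MvPolynomial.eval c) =
      Matrix.charpoly (-(LinearMap.toMatrix b b
        (LieAlgebra.ad ℂ 𝔰 (∑ k, c k • b k)))) := by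
  rw [← Matrix.charpoly_map]
  congr 1
  ext i j
  have : (LieAlgebra.ad ℂ 𝔰 (∑ k, c k • b k)) = ∑ k, c k • LieAlgebra.ad ℂ 𝔰 (b k) := by
    have h1 : ∀ x, LieAlgebra.ad ℂ 𝔰 x = (LieAlgebra.ad ℂ 𝔰).toLinearMap x := fun _ => rfl
    simp only [h1, map_sum, _root_.map_smul]
  simp [auxMat, this, map_sum, _root_.map_smul, Matrix.map_apply, Matrix.sum_apply,
    Matrix.smul_apply, Matrix.neg_apply, smul_eq_mul]

lemma hasEigenvalue_of_weight (𝔫 : LieIdeal ℂ 𝔰) (α : Module.Dual ℂ 𝔰)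
    (hα : lieWeightSpace 𝔰 𝔫 α ≠ ⊥) (x : 𝔰) :
    (LieAlgebra.ad ℂ 𝔰 x).HasEigenvalue (α x) := by
  obtain ⟨v, hv, hv0⟩ := (Submodule.ne_bot_iff _).mp hα
  have hx : v ∈ Module.End.maxGenEigenspace (LieModule.toEnd ℂ 𝔰 ↥𝔫 x) (α x) := by
    exact (Submodule.mem_iInf _).mp hv x
  rw [Module.End.mem_maxGenEigenspace] at hx
  obtain ⟨k, hk⟩ := hx
  have key : ∀ (m : ℕ) (u : ↥𝔫),
      ((LieAlgebra.ad ℂ 𝔰 x - α x • 1) ^ m) (u : 𝔰)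
        = (((LieModule.toEnd ℂ 𝔰 ↥𝔫 x - α x • 1) ^ m) u : 𝔰) := by
    intro m
    induction m with
    | zero => intro u; simp
    | succ m ih =>
        intro u
        rw [pow_succ, pow_succ]
        have h1 : ((LieAlgebra.ad ℂ 𝔰 x - α x • 1)) (u : 𝔰)
            = (((LieModule.toEnd ℂ 𝔰 ↥𝔫 x - α x • 1)) u : 𝔰) := by
          simp [LieAlgebra.ad_apply, LieModule.toEnd_apply_apply]
        simp only [Module.End.mul_apply, h1]
        exact ih _
  have hw : ((LieAlgebra.ad ℂ 𝔰 x - α x • 1) ^ k) (v : 𝔰) = 0 := by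
    rw [key k v, hk]; simp
  have hmem : (v : 𝔰) ∈ (LieAlgebra.ad ℂ 𝔰 x).genEigenspace (α x) (k : ℕ∞) := by
    rw [Module.End.mem_genEigenspace]
    exact ⟨k, le_rfl, hw⟩
  have hv0' : (v : 𝔰) ≠ 0 := fun h => hv0 (Subtype.coe_injective (by simpa using h))
  have huni : (LieAlgebra.ad ℂ 𝔰 x).HasUnifEigenvalue (α x) (k : ℕ∞) := by
    rw [Module.End.HasUnifEigenvalue]
    exact (Submodule.ne_bot_iff _).mpr ⟨(v : 𝔰), hmem, hv0'⟩
  exact huni.lt zero_lt_one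

lemma charpoly_neg_isRoot (b : Module.Basis (Fin N) ℂ 𝔰) (x : 𝔰) {μ : ℂ}
    (h : (LieAlgebra.ad ℂ 𝔰 x).HasEigenvalue μ) :
    (Matrix.charpoly (-(LinearMap.toMatrix b b (LieAlgebra.ad ℂ 𝔰 x)))).IsRoot (-μ) := by
  have : FiniteDimensional ℂ 𝔰 := Module.Finite.of_basis b
  have h2 : (-(LieAlgebra.ad ℂ 𝔰 x) : Module.End ℂ 𝔰).HasEigenvalue (-μ) := by
    obtain ⟨w, hw⟩ := h.exists_hasEigenvector
    refine Module.End.hasEigenvalue_of_hasEigenvector (x := w) ⟨?_, hw.2⟩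
    rw [Module.End.mem_eigenspace_iff]
    have := Module.End.mem_eigenspace_iff.mp hw.1
    simp [this]
  have h4 : (-(LieAlgebra.ad ℂ 𝔰 x) : Module.End ℂ 𝔰).charpoly.IsRoot (-μ) :=
    (Module.End.hasEigenvalue_iff_isRoot.mp h2).dvd (LinearMap.minpoly_dvd_charpoly _)
  rw [show -(LinearMap.toMatrix b b (LieAlgebra.ad ℂ 𝔰 x))
      = LinearMap.toMatrix b b (-(LieAlgebra.ad ℂ 𝔰 x)) from (map_neg _ _).symm,
    LinearMap.charpoly_toMatrix]
  exact h4

lemma linePoly_dvd (b : Module.Basis (Fin N) ℂ 𝔰) (𝔫 : LieIdeal ℂ 𝔰) (α : Module.Dual ℂ 𝔰)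
    (hα : lieWeightSpace 𝔰 𝔫 α ≠ ⊥) :
    (Polynomial.X + Polynomial.C (∑ k, MvPolynomial.C (α (b k)) * MvPolynomial.X k))
      ∣ MvPolynomial.finSuccEquiv ℂ N (lieCharPoly N 𝔰 b) := by
  set ℓ : MvPolynomial (Fin N) ℂ := ∑ k, MvPolynomial.C (α (b k)) * MvPolynomial.X k with hℓ
  set P := MvPolynomial.finSuccEquiv ℂ N (lieCharPoly N 𝔰 b) with hP
  have hroot : P.eval (-ℓ) = 0 := by
    have hz : ∀ c : Fin N → ℂ, MvPolynomial.eval c (P.eval (-ℓ)) = 0 := by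
      intro c
      have h1 : MvPolynomial.eval c (P.eval (-ℓ))
          = (P.map (MvPolynomial.eval c)).eval (MvPolynomial.eval c (-ℓ)) := by
        rw [Polynomial.eval_map, Polynomial.eval₂_hom]
      have hevℓ : MvPolynomial.eval c ℓ = α (∑ k, c k • b k) := by
        rw [hℓ, map_sum, map_sum]
        refine Finset.sum_congr rfl fun k _ => ?_
        simp [mul_comm]
      have h2 : P.map (MvPolynomial.eval c)
          = Matrix.charpoly (-(LinearMap.toMatrix b b
              (LieAlgebra.ad ℂ 𝔰 (∑ k, c k • b k)))) := by
        rw [hP, finSuccEquiv_lieCharPoly, map_eval_charpoly]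
      rw [h1, map_neg, hevℓ, h2]
      exact charpoly_neg_isRoot b _ (hasEigenvalue_of_weight 𝔫 α hα _)
    have := MvPolynomial.funext (p := P.eval (-ℓ)) (q := 0) (fun c => by simp [hz c])
    exact this
  have : (Polynomial.X - Polynomial.C (-ℓ)) ∣ P := Polynomial.dvd_iff_isRoot.mpr hroot
  simpa [sub_neg_eq_add] using this

end Aux

/-- If `𝔰` is an `N`-dimensional complex solvable Lie algebra with ordered
basis, and `𝔫 ⊆ 𝔰` is a nilpotent Lie ideal with `[𝔰,𝔰] ⊆ 𝔫`, then `k(𝔰) ≥ |Δ|`. -/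
theorem numIrreducibleFactors_ge_card_weights
    (N : ℕ) (𝔰 : Type) [LieRing 𝔰] [LieAlgebra ℂ 𝔰] [LieAlgebra.IsSolvable 𝔰]
    (b : Module.Basis (Fin N) ℂ 𝔰)
    (𝔫 : LieIdeal ℂ 𝔰) (hnil : LieRing.IsNilpotent ↥𝔫)
    (hder : ∀ x y : 𝔰, ⁅x, y⁆ ∈ 𝔫) :
    numIrreducibleFactors (lieCharPoly N 𝔰 b) ≥ (lieWeightSet 𝔰 𝔫).ncard := by
  classical
  set Q := lieCharPoly N 𝔰 b with hQ
  set φ := MvPolynomial.finSuccEquiv ℂ N with hφ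
  have hQ0 : Q ≠ 0 := by
    intro h
    have : φ Q = 0 := by rw [h]; exact map_zero _
    rw [finSuccEquiv_lieCharPoly] at this
    exact (Matrix.charpoly_monic _).ne_zero this
  -- the linear polynomial attached to a weight
  set ℓ : Module.Dual ℂ 𝔰 → MvPolynomial (Fin N) ℂ :=
    fun α => ∑ k, MvPolynomial.C (α (b k)) * MvPolynomial.X k with hℓdef
  set L : Module.Dual ℂ 𝔰 → MvPolynomial (Fin (N + 1)) ℂ :=
    fun α => φ.symm (Polynomial.X + Polynomial.C (ℓ α)) with hLdef
  have hLirr : ∀ α, Irreducible (L α) := by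
    intro α
    have : Irreducible (Polynomial.X + Polynomial.C (ℓ α)) := by
      have := Polynomial.irreducible_X_sub_C (R := MvPolynomial (Fin N) ℂ) (-(ℓ α))
      simpa [sub_neg_eq_add] using this
    exact (MulEquiv.irreducible_iff φ.symm.toRingEquiv.toMulEquiv).mpr this
  have hφL : ∀ α, φ (L α) = Polynomial.X + Polynomial.C (ℓ α) := fun α =>
    φ.apply_symm_apply _
  have hLdvd : ∀ α ∈ lieWeightSet 𝔰 𝔫, L α ∣ Q := by
    intro α hα
    have h := linePoly_dvd b 𝔫 α hα
    have h2 := map_dvd φ.symm h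
    rw [AlgEquiv.symm_apply_apply] at h2
    exact h2
  have hSfin : ({a : Associates (MvPolynomial (Fin (N + 1)) ℂ) |
      Irreducible a ∧ a ∣ Associates.mk Q}).Finite := by
    refine Set.Finite.subset
      ((UniqueFactorizationMonoid.factors Q).toFinset.image Associates.mk).finite_toSet ?_
    rintro a ⟨hairr, hadvd⟩
    obtain ⟨p, rfl⟩ := Associates.mk_surjective a
    have hp : Irreducible p := Associates.irreducible_mk.mp hairr
    have hpd : p ∣ Q := Associates.mk_dvd_mk.mp hadvd
    obtain ⟨q, hq, hassoc⟩ := UniqueFactorizationMonoid.exists_mem_factors_of_dvd hQ0 hp hpd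
    simp only [Finset.coe_image, Set.mem_image, Finset.mem_coe, Multiset.mem_toFinset]
    exact ⟨q, hq, (Associates.mk_eq_mk_iff_associated.mpr hassoc).symm⟩
  rw [ge_iff_le, numIrreducibleFactors]
  apply Set.ncard_le_ncard_of_injOn (fun α => Associates.mk (L α)) ?_ ?_ hSfin
  · intro α hα
    exact ⟨Associates.irreducible_mk.mpr (hLirr α), Associates.mk_dvd_mk.mpr (hLdvd α hα)⟩
  · intro α hα β hβ hEq
    have hassoc : Associated (L α) (L β) := Associates.mk_eq_mk_iff_associated.mp hEq
    have h2 : Associated (φ (L α)) (φ (L β)) := by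
      obtain ⟨u, hu⟩ := hassoc
      refine ⟨Units.map φ.toRingEquiv.toMulEquiv.toMonoidHom u, ?_⟩
      rw [Units.coe_map]
      show φ (L α) * φ (u : MvPolynomial (Fin (N + 1)) ℂ) = φ (L β)
      rw [← _root_.map_mul, hu]
    rw [hφL, hφL] at h2
    have h3 : Polynomial.X + Polynomial.C (ℓ α) = Polynomial.X + Polynomial.C (ℓ β) :=
      Polynomial.eq_of_monic_of_associated (Polynomial.monic_X_add_C _)
        (Polynomial.monic_X_add_C _) h2
    have h4 : ℓ α = ℓ β := Polynomial.C_injective (add_left_cancel h3)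
    apply b.ext
    intro k
    have h5 := congrArg (MvPolynomial.eval (Pi.single k 1)) h4
    simpa [hℓdef, map_sum, Pi.single_apply, mul_ite, Finset.sum_ite_eq'] using h5
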